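/- arXiv:1510.00864 — 7 statements merged into one kernel-verified Lean document; each statement's English description precedes it below -/
import Mathlib

section
/- Let N ≥ 1, let A ∈ ℂ^{N,N}, let b ∈ ℝ with b > −1, and let γ_A > 0. Then the following two statements are equivalent: (i) |z|²·Re⟨w,Aw⟩ + b·Re⟨w,z⟩·Re⟨z,Aw⟩ ≥ γ_A·|z|²·|w|² for all w, z ∈ ℂ^N; (ii) (1 + b/2)·Re⟨w,Aw⟩ − (|b|/2)·|Aw| ≥ γ_A for all w ∈ ℂ^N with |w| = 1. -/
/-- The action of a complex `N × N` matrix on `EuclideanSpace ℂ (Fin N)`. -/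
noncomputable def mulE {N : ℕ} (A : Matrix (Fin N) (Fin N) ℂ)
    (w : EuclideanSpace ℂ (Fin N)) : EuclideanSpace ℂ (Fin N) :=
  Matrix.toEuclideanLin A w

open scoped RealInnerProductSpace

lemma mulE_smul {N : ℕ} (A : Matrix (Fin N) (Fin N) ℂ) (r : ℝ)
    (x : EuclideanSpace ℂ (Fin N)) : mulE A (r • x) = r • mulE A x := by
  simp [mulE, LinearMap.map_smul_of_tower]

lemma re_inner_eq {N : ℕ} (x y : EuclideanSpace ℂ (Fin N)) :
    (inner ℂ x y : ℂ).re = ⟪x, y⟫ := by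
  simp [PiLp.inner_apply, Complex.inner, Complex.re_sum]

lemma key_refl {E : Type*} [NormedAddCommGroup E] [InnerProductSpace ℝ E]
    (w z u : E) (hw : ‖w‖ = 1) (hz : ‖z‖ = 1) :
    |2 * ⟪w, z⟫ * ⟪z, u⟫ - ⟪w, u⟫| ≤ ‖u‖ := by
  have h1 : 2 * ⟪w, z⟫ * ⟪z, u⟫ - ⟪w, u⟫ = ⟪w, (2 * ⟪z, u⟫) • z - u⟫ := by
    rw [inner_sub_right, real_inner_smul_right]; ring
  have h2 : ‖(2 * ⟪z, u⟫) • z - u‖ = ‖u‖ := by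
    have h3 := norm_sub_sq_real ((2 * ⟪z, u⟫) • z) u
    rw [real_inner_smul_left, norm_smul] at h3
    have h4 : ‖(2 * ⟪z, u⟫) • z - u‖ ^ 2 = ‖u‖ ^ 2 := by
      rw [h3, Real.norm_eq_abs, hz, mul_one, sq_abs]; ring
    nlinarith [norm_nonneg ((2 * ⟪z, u⟫) • z - u), norm_nonneg u]
  rw [h1]
  calc |⟪w, (2 * ⟪z, u⟫) • z - u⟫| ≤ ‖w‖ * ‖(2 * ⟪z, u⟫) • z - u‖ :=
        abs_real_inner_le_norm _ _
    _ = ‖u‖ := by rw [hw, h2, one_mul]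

set_option maxHeartbeats 1000000 in
/-- Equivalence of the two forms of the `L^p`-dissipativity condition for complex matrices. -/
theorem stmt_3 {N : ℕ} (hN : 1 ≤ N) (A : Matrix (Fin N) (Fin N) ℂ) (b : ℝ)
    (hb : -1 < b) (γ_A : ℝ) (hγ : 0 < γ_A) :
    (∀ w z : EuclideanSpace ℂ (Fin N),
      ‖z‖ ^ 2 * (inner ℂ w (mulE A w) : ℂ).re
        + b * ((inner ℂ w z : ℂ).re * (inner ℂ z (mulE A w) : ℂ).re)
        ≥ γ_A * (‖z‖ ^ 2 * ‖w‖ ^ 2))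
    ↔ (∀ w : EuclideanSpace ℂ (Fin N), ‖w‖ = 1 →
      (1 + b / 2) * (inner ℂ w (mulE A w) : ℂ).re - (|b| / 2) * ‖mulE A w‖ ≥ γ_A) := by
  constructor
  · -- (i) → (ii)
    intro h w hw
    simp only [re_inner_eq]
    set u := mulE A w with hu
    set s := (⟪w, u⟫ : ℝ) with hs
    have hww : (⟪w, w⟫ : ℝ) = 1 := by
      rw [real_inner_self_eq_norm_sq, hw]; norm_num
    have h0 := h w w
    simp only [re_inner_eq, hw, hww, ← hu, ← hs] at h0
    have hs_pos : 0 < s := by nlinarith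
    have hu0 : u ≠ 0 := by
      intro h0'
      rw [hs, h0', inner_zero_right] at hs_pos
      exact lt_irrefl _ hs_pos
    have hnupos : 0 < ‖u‖ := norm_pos_iff.mpr hu0
    have hnu : ‖u‖ ≠ 0 := hnupos.ne'
    have hsleq : s ≤ ‖u‖ := by
      have := real_inner_le_norm w u
      rwa [hw, one_mul] at this
    have hvnorm : ‖(‖u‖⁻¹ : ℝ) • u‖ = 1 := norm_smul_inv_norm (𝕜 := ℝ) hu0
    have hwv : (⟪w, (‖u‖⁻¹ : ℝ) • u⟫ : ℝ) = ‖u‖⁻¹ * s := by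
      rw [real_inner_smul_right]
    have h5 : ‖u‖⁻¹ * ‖u‖ ^ 2 = ‖u‖ := by
      rw [sq, ← mul_assoc, inv_mul_cancel₀ hnu, one_mul]
    set t := ‖u‖⁻¹ * s with ht
    rcases le_or_gt 0 b with hb0 | hb0
    · rw [abs_of_nonneg hb0]
      by_cases hd : w - (‖u‖⁻¹ : ℝ) • u = 0
      · -- degenerate: u = ‖u‖ • w
        have hweq : w = (‖u‖⁻¹ : ℝ) • u := by rwa [sub_eq_zero] at hd
        have hsnu : s = ‖u‖ := by
          rw [hs, hweq, real_inner_smul_left, real_inner_self_eq_norm_sq]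
          field_simp
        have hz1 : ‖(Complex.I : ℂ) • w‖ = 1 := by
          rw [norm_smul, Complex.norm_I, hw, one_mul]
        have hzero : (⟪w, (Complex.I : ℂ) • w⟫ : ℝ) = 0 := by
          have him : (inner ℂ w w : ℂ).im = 0 := by
            simpa using inner_self_im (𝕜 := ℂ) w
          rw [← re_inner_eq, inner_smul_right, Complex.mul_re, Complex.I_re,
            Complex.I_im, him]
          ring
        have h1 := h w ((Complex.I : ℂ) • w)
        simp only [re_inner_eq, hz1, hw, hzero, ← hu, ← hs] at h1
        nlinarith
      · set d := w - (‖u‖⁻¹ : ℝ) • u with hdd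
        have hdn0 : ‖d‖ ≠ 0 := norm_ne_zero_iff.mpr hd
        have hdpos : 0 < ‖d‖ := norm_pos_iff.mpr hd
        have hdsq : ‖d‖ ^ 2 = 2 - 2 * t := by
          rw [hdd, norm_sub_sq_real, hwv, hw, hvnorm]; ring
        set z := (‖d‖⁻¹ : ℝ) • d with hz
        have hz1 : ‖z‖ = 1 := norm_smul_inv_norm (𝕜 := ℝ) hd
        have hp : (⟪w, z⟫ : ℝ) = ‖d‖⁻¹ * (1 - t) := by
          rw [hz, real_inner_smul_right, hdd, inner_sub_right, hwv, hww]
        have hq : (⟪z, u⟫ : ℝ) = ‖d‖⁻¹ * (s - ‖u‖) := by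
          rw [hz, real_inner_smul_left, hdd, inner_sub_left, real_inner_smul_left,
            real_inner_self_eq_norm_sq, ← hs, h5]
        have h2t : (2 : ℝ) - 2 * (‖u‖⁻¹ * s) ≠ 0 := by
          rw [← hdsq]; positivity
        have hinv : ‖d‖⁻¹ * ‖d‖⁻¹ = ((2 : ℝ) - 2 * (‖u‖⁻¹ * s))⁻¹ := by
          rw [← hdsq, sq, mul_inv]
        have hpq : (⟪w, z⟫ : ℝ) * ⟪z, u⟫ = (s - ‖u‖) / 2 := by
          rw [hp, hq, show ‖d‖⁻¹ * (1 - t) * (‖d‖⁻¹ * (s - ‖u‖))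
              = ‖d‖⁻¹ * ‖d‖⁻¹ * ((1 - t) * (s - ‖u‖)) from by ring, hinv,
            inv_mul_eq_div, div_eq_div_iff h2t (two_ne_zero)]
          ring
        have h1 := h w z
        simp only [re_inner_eq, hz1, hw, ← hu, ← hs] at h1
        rw [hpq] at h1
        nlinarith
    · rw [abs_of_neg hb0]
      set d := w + (‖u‖⁻¹ : ℝ) • u with hdd
      have hdsq : ‖d‖ ^ 2 = 2 + 2 * t := by
        rw [hdd, norm_add_sq_real, hwv, hw, hvnorm]; ring
      have htpos : 0 < t := mul_pos (inv_pos.mpr hnupos) hs_pos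
      have hd : d ≠ 0 := by
        intro h0'
        rw [h0', norm_zero] at hdsq
        nlinarith
      have hdn0 : ‖d‖ ≠ 0 := norm_ne_zero_iff.mpr hd
      set z := (‖d‖⁻¹ : ℝ) • d with hz
      have hz1 : ‖z‖ = 1 := norm_smul_inv_norm (𝕜 := ℝ) hd
      have hp : (⟪w, z⟫ : ℝ) = ‖d‖⁻¹ * (1 + t) := by
        rw [hz, real_inner_smul_right, hdd, inner_add_right, hwv, hww]
      have hq : (⟪z, u⟫ : ℝ) = ‖d‖⁻¹ * (s + ‖u‖) := by
        rw [hz, real_inner_smul_left, hdd, inner_add_left, real_inner_smul_left,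
          real_inner_self_eq_norm_sq, ← hs, h5]
      have h2t : (2 : ℝ) + 2 * (‖u‖⁻¹ * s) ≠ 0 := by positivity
      have hinv : ‖d‖⁻¹ * ‖d‖⁻¹ = ((2 : ℝ) + 2 * (‖u‖⁻¹ * s))⁻¹ := by
        rw [← hdsq, sq, mul_inv]
      have hpq : (⟪w, z⟫ : ℝ) * ⟪z, u⟫ = (s + ‖u‖) / 2 := by
        rw [hp, hq, show ‖d‖⁻¹ * (1 + t) * (‖d‖⁻¹ * (s + ‖u‖))
            = ‖d‖⁻¹ * ‖d‖⁻¹ * ((1 + t) * (s + ‖u‖)) from by ring, hinv,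
          inv_mul_eq_div, div_eq_div_iff h2t (two_ne_zero)]
        ring
      have h1 := h w z
      simp only [re_inner_eq, hz1, hw, ← hu, ← hs] at h1
      rw [hpq] at h1
      nlinarith
  · -- (ii) → (i)
    intro h w z
    by_cases hw0 : w = 0
    · simp [hw0, mulE]
    by_cases hz0 : z = 0
    · simp [hz0, mulE]
    have haw : 0 < ‖w‖ := norm_pos_iff.mpr hw0
    have hcz : 0 < ‖z‖ := norm_pos_iff.mpr hz0
    set a := ‖w‖ with ha
    set c := ‖z‖ with hc
    set w' := (a⁻¹ : ℝ) • w with hw'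
    set z' := (c⁻¹ : ℝ) • z with hz'
    have hw1 : ‖w'‖ = 1 := norm_smul_inv_norm (𝕜 := ℝ) hw0
    have hz1 : ‖z'‖ = 1 := norm_smul_inv_norm (𝕜 := ℝ) hz0
    have hww' : w = a • w' := by
      rw [hw', smul_smul, mul_inv_cancel₀ haw.ne', one_smul]
    have hzz' : z = c • z' := by
      rw [hz', smul_smul, mul_inv_cancel₀ hcz.ne', one_smul]
    set u' := mulE A w' with hu'
    have hmul : mulE A w = a • u' := by
      rw [hu', ← mulE_smul, ← hww']
    have hkey := key_refl w' z' u' hw1 hz1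
    have hii := h w' hw1
    simp only [re_inner_eq, ← hu'] at hii
    simp only [re_inner_eq]
    have e1 : (⟪w, z⟫ : ℝ) = a * (c * ⟪w', z'⟫) := by
      rw [show (⟪w, z⟫ : ℝ) = ⟪a • w', c • z'⟫ from by rw [← hww', ← hzz'],
        real_inner_smul_left, real_inner_smul_right]
    have e2 : (⟪w, mulE A w⟫ : ℝ) = a * (a * ⟪w', u'⟫) := by
      rw [hmul, real_inner_smul_right,
        show (⟪w, u'⟫ : ℝ) = a * ⟪w', u'⟫ from by
          rw [show (⟪w, u'⟫ : ℝ) = ⟪a • w', u'⟫ from by rw [← hww'], real_inner_smul_left]]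
    have e3 : (⟪z, mulE A w⟫ : ℝ) = a * (c * ⟪z', u'⟫) := by
      rw [hmul, real_inner_smul_right,
        show (⟪z, u'⟫ : ℝ) = c * ⟪z', u'⟫ from by
          rw [show (⟪z, u'⟫ : ℝ) = ⟪c • z', u'⟫ from by rw [← hzz'], real_inner_smul_left]]
    rw [e1, e2, e3]
    have main : (⟪w', u'⟫ : ℝ) + b * (⟪w', z'⟫ * ⟪z', u'⟫) ≥ γ_A := by
      obtain ⟨k1, k2⟩ := abs_le.mp hkey
      rcases le_or_gt 0 b with hb0 | hb0
      · rw [abs_of_nonneg hb0] at hii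
        nlinarith [mul_le_mul_of_nonneg_left k1 hb0]
      · rw [abs_of_neg hb0] at hii
        nlinarith [mul_le_mul_of_nonpos_left k2 hb0.le]
    nlinarith [mul_le_mul_of_nonneg_left main (le_of_lt (by positivity : (0:ℝ) < a ^ 2 * c ^ 2))]
end

section
/- Let N ≥ 1, let A ∈ ℂ^{N,N}, and let b ∈ ℝ with b > −1. Then the following two statements are equivalent: (i) there exists γ_A > 0 such that (1 + b/2)·Re⟨w,Aw⟩ − (|b|/2)·|Aw| ≥ γ_A for all w ∈ ℂ^N with |w| = 1; (ii) A is invertible and μ₁(A) > |b|/(2+b). -/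
/-- The first antieigenvalue `μ₁(A)` of a complex matrix `A`:
`μ₁(A) = inf { Re⟨w, Aw⟩ / (|w|·|Aw|) : w ≠ 0, Aw ≠ 0 }`. -/
noncomputable def mu1 {N : ℕ} (A : Matrix (Fin N) (Fin N) ℂ) : ℝ :=
  sInf { x : ℝ | ∃ w : EuclideanSpace ℂ (Fin N), w ≠ 0 ∧ mulE A w ≠ 0 ∧
    x = (inner ℂ w (mulE A w) : ℂ).re / (‖w‖ * ‖mulE A w‖) }

lemma mulE_smul_real {N : ℕ} (A : Matrix (Fin N) (Fin N) ℂ) (r : ℝ)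
    (w : EuclideanSpace ℂ (Fin N)) : mulE A ((r : ℂ) • w) = (r : ℂ) • mulE A w := by
  simp [mulE]

lemma mulE_mul {N : ℕ} (A B : Matrix (Fin N) (Fin N) ℂ) (w : EuclideanSpace ℂ (Fin N)) :
    mulE B (mulE A w) = mulE (B * A) w := by
  simp [mulE, Matrix.toEuclideanLin_apply, Matrix.mulVec_mulVec]

lemma mulE_one {N : ℕ} (w : EuclideanSpace ℂ (Fin N)) : mulE 1 w = w := by
  simp [mulE, Matrix.toEuclideanLin_apply, Matrix.one_mulVec]

lemma norm_mulE_le {N : ℕ} (A : Matrix (Fin N) (Fin N) ℂ) (w : EuclideanSpace ℂ (Fin N)) :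
    ‖mulE A w‖ ≤ ‖LinearMap.toContinuousLinearMap (Matrix.toEuclideanLin A)‖ * ‖w‖ :=
  (LinearMap.toContinuousLinearMap (Matrix.toEuclideanLin A)).le_opNorm w

lemma isUnit_of_mulE {N : ℕ} (A : Matrix (Fin N) (Fin N) ℂ)
    (h : ∀ w : EuclideanSpace ℂ (Fin N), w ≠ 0 → mulE A w ≠ 0) : IsUnit A := by
  rw [Matrix.isUnit_iff_isUnit_det, isUnit_iff_ne_zero]
  intro hdet
  obtain ⟨v, hv, hAv⟩ := (Matrix.exists_mulVec_eq_zero_iff).mpr hdet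
  refine h ((WithLp.equiv 2 (Fin N → ℂ)).symm v) (by simpa using hv) ?_
  simp [mulE, Matrix.toEuclideanLin_apply_piLp_toLp, hAv]

set_option maxHeartbeats 1000000 in
/-- The unit-vector form of the `L^p`-dissipativity condition is equivalent to the
antieigenvalue condition, for complex matrices. -/
theorem stmt_5 {N : ℕ} (hN : 1 ≤ N) (A : Matrix (Fin N) (Fin N) ℂ) (b : ℝ)
    (hb : -1 < b) :
    (∃ γ_A : ℝ, 0 < γ_A ∧ ∀ w : EuclideanSpace ℂ (Fin N), ‖w‖ = 1 →
      (1 + b / 2) * (inner ℂ w (mulE A w) : ℂ).re - (|b| / 2) * ‖mulE A w‖ ≥ γ_A)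
    ↔ (IsUnit A ∧ mu1 A > |b| / (2 + b)) := by
  have h2b : (0:ℝ) < 2 + b := by linarith
  set c : ℝ := |b| / (2 + b) with hc_def
  have habs : |b| < 2 + b := by
    rcases abs_cases b with ⟨h1, _⟩ | ⟨h1, _⟩ <;> linarith
  have hc0 : 0 ≤ c := div_nonneg (abs_nonneg b) h2b.le
  have hc1 : c < 1 := (div_lt_one h2b).mpr habs
  have hkey : (1 + b / 2) * c = |b| / 2 := by
    rw [hc_def]; field_simp
  have h1b : (0:ℝ) < 1 + b / 2 := by linarith
  have hw0norm : ‖(EuclideanSpace.single (⟨0, hN⟩ : Fin N) (1:ℂ))‖ = 1 := by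
    rw [EuclideanSpace.norm_single]; simp
  have hw0ne : (EuclideanSpace.single (⟨0, hN⟩ : Fin N) (1:ℂ)) ≠ 0 := by
    intro h; rw [h, norm_zero] at hw0norm; exact one_ne_zero hw0norm.symm
  set S := { x : ℝ | ∃ w : EuclideanSpace ℂ (Fin N), w ≠ 0 ∧ mulE A w ≠ 0 ∧
    x = (inner ℂ w (mulE A w) : ℂ).re / (‖w‖ * ‖mulE A w‖) } with hS_def
  constructor
  · rintro ⟨γ, hγ, hcond⟩
    have hscale : ∀ w : EuclideanSpace ℂ (Fin N), w ≠ 0 →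
        (1 + b / 2) * (inner ℂ w (mulE A w) : ℂ).re - (|b| / 2) * (‖w‖ * ‖mulE A w‖)
          ≥ γ * ‖w‖ ^ 2 := by
      intro w hw
      have hnw : (0:ℝ) < ‖w‖ := norm_pos_iff.mpr hw
      have hu : ‖((‖w‖⁻¹ : ℝ) : ℂ) • w‖ = 1 := by
        rw [norm_smul, Complex.norm_real, Real.norm_eq_abs,
          abs_of_pos (inv_pos.mpr hnw), inv_mul_cancel₀ hnw.ne']
      have h := hcond _ hu
      rw [mulE_smul_real, inner_smul_left, inner_smul_right] at h
      simp only [Complex.conj_ofReal, Complex.re_ofReal_mul, norm_smul,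
        Complex.norm_real, Real.norm_eq_abs, abs_of_pos (inv_pos.mpr hnw)] at h
      have h2 : γ * ‖w‖ ^ 2 ≤
          ((1 + b / 2) * (‖w‖⁻¹ * (‖w‖⁻¹ * (inner ℂ w (mulE A w) : ℂ).re))
            - |b| / 2 * (‖w‖⁻¹ * ‖mulE A w‖)) * ‖w‖ ^ 2 :=
        mul_le_mul_of_nonneg_right h (sq_nonneg _)
      have h3 : ((1 + b / 2) * (‖w‖⁻¹ * (‖w‖⁻¹ * (inner ℂ w (mulE A w) : ℂ).re))
            - |b| / 2 * (‖w‖⁻¹ * ‖mulE A w‖)) * ‖w‖ ^ 2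
          = (1 + b / 2) * (inner ℂ w (mulE A w) : ℂ).re
            - (|b| / 2) * (‖w‖ * ‖mulE A w‖) := by
        field_simp
      rw [h3] at h2
      exact h2
    have hAw : ∀ w : EuclideanSpace ℂ (Fin N), w ≠ 0 → mulE A w ≠ 0 := by
      intro w hw hzero
      have h := hscale w hw
      rw [hzero] at h
      simp only [inner_zero_right, Complex.zero_re, norm_zero] at h
      have hnw : (0:ℝ) < ‖w‖ := norm_pos_iff.mpr hw
      nlinarith [mul_pos hγ (pow_pos hnw 2)]
    have hunit : IsUnit A := isUnit_of_mulE A hAw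
    refine ⟨hunit, ?_⟩
    set M := ‖LinearMap.toContinuousLinearMap (Matrix.toEuclideanLin A)‖ with hM
    have hM0 : 0 < M := by
      by_contra hM0
      push_neg at hM0
      have h1 := norm_mulE_le A (EuclideanSpace.single (⟨0, hN⟩ : Fin N) (1:ℂ))
      have h3 : (0:ℝ) < ‖mulE A (EuclideanSpace.single (⟨0, hN⟩ : Fin N) (1:ℂ))‖ :=
        norm_pos_iff.mpr (hAw _ hw0ne)
      nlinarith [mul_nonpos_of_nonpos_of_nonneg hM0
        (norm_nonneg (EuclideanSpace.single (⟨0, hN⟩ : Fin N) (1:ℂ)))]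
    set d : ℝ := γ / ((1 + b / 2) * M) with hd
    have hd0 : 0 < d := div_pos hγ (by positivity)
    have h6 : (1 + b / 2) * (d * M) = γ := by
      rw [hd]; field_simp
    have hlb : ∀ x ∈ S, c + d ≤ x := by
      rintro x ⟨w, hw, hAwne, rfl⟩
      have hnw : (0:ℝ) < ‖w‖ := norm_pos_iff.mpr hw
      have hnAw : (0:ℝ) < ‖mulE A w‖ := norm_pos_iff.mpr hAwne
      rw [le_div_iff₀ (by positivity)]
      have h1 := hscale w hw
      have h3 : d * (‖w‖ * ‖mulE A w‖) ≤ d * (M * ‖w‖ ^ 2) := by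
        have h2 : ‖mulE A w‖ ≤ M * ‖w‖ := norm_mulE_le A w
        have : ‖w‖ * ‖mulE A w‖ ≤ M * ‖w‖ ^ 2 := by nlinarith
        nlinarith
      have key2 : (1 + b / 2) * ((c + d) * (‖w‖ * ‖mulE A w‖))
          ≤ (1 + b / 2) * (inner ℂ w (mulE A w) : ℂ).re := by
        calc (1 + b / 2) * ((c + d) * (‖w‖ * ‖mulE A w‖))
            = ((1 + b / 2) * c) * (‖w‖ * ‖mulE A w‖)
              + (1 + b / 2) * (d * (‖w‖ * ‖mulE A w‖)) := by ring
          _ ≤ (|b| / 2) * (‖w‖ * ‖mulE A w‖)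
              + (1 + b / 2) * (d * (M * ‖w‖ ^ 2)) := by
              rw [hkey]
              exact add_le_add_right (mul_le_mul_of_nonneg_left h3 h1b.le) _
          _ = (|b| / 2) * (‖w‖ * ‖mulE A w‖) + ((1 + b / 2) * (d * M)) * ‖w‖ ^ 2 := by
              ring
          _ = (|b| / 2) * (‖w‖ * ‖mulE A w‖) + γ * ‖w‖ ^ 2 := by rw [h6]
          _ ≤ (1 + b / 2) * (inner ℂ w (mulE A w) : ℂ).re := by linarith
      exact le_of_mul_le_mul_left key2 h1b
    have hne : S.Nonempty :=
      ⟨_, (EuclideanSpace.single (⟨0, hN⟩ : Fin N) (1:ℂ)), hw0ne, hAw _ hw0ne, rfl⟩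
    have hfin : c + d ≤ mu1 A := le_csInf hne hlb
    linarith
  · rintro ⟨hunit, hmu⟩
    have hdet : IsUnit A.det := (Matrix.isUnit_iff_isUnit_det A).mp hunit
    have hBA : A⁻¹ * A = 1 := Matrix.nonsing_inv_mul A hdet
    have hinv : ∀ w : EuclideanSpace ℂ (Fin N), mulE A⁻¹ (mulE A w) = w := by
      intro w; rw [mulE_mul, hBA, mulE_one]
    have hex : ∃ m : ℝ, 0 < m ∧ ∀ w : EuclideanSpace ℂ (Fin N), ‖w‖ ≤ m * ‖mulE A w‖ := by
      refine ⟨max ‖LinearMap.toContinuousLinearMap (Matrix.toEuclideanLin A⁻¹)‖ 1,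
        lt_of_lt_of_le one_pos (le_max_right _ _), fun w => ?_⟩
      calc ‖w‖ = ‖mulE A⁻¹ (mulE A w)‖ := by rw [hinv]
        _ ≤ ‖LinearMap.toContinuousLinearMap (Matrix.toEuclideanLin A⁻¹)‖ * ‖mulE A w‖ :=
            norm_mulE_le A⁻¹ (mulE A w)
        _ ≤ _ := mul_le_mul_of_nonneg_right (le_max_left _ _) (norm_nonneg _)
    obtain ⟨m, hm0, hlow⟩ := hex
    have hAwne : ∀ w : EuclideanSpace ℂ (Fin N), w ≠ 0 → mulE A w ≠ 0 := by
      intro w hw h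
      apply hw
      rw [← hinv w, h]
      simp [mulE]
    have hbdd : BddBelow S := by
      refine ⟨-1, ?_⟩
      rintro x ⟨w, hw, hAw, rfl⟩
      have hnw : (0:ℝ) < ‖w‖ := norm_pos_iff.mpr hw
      have hnAw : (0:ℝ) < ‖mulE A w‖ := norm_pos_iff.mpr hAw
      rw [le_div_iff₀ (by positivity)]
      have h1 : ‖(inner ℂ w (mulE A w) : ℂ)‖ ≤ ‖w‖ * ‖mulE A w‖ := norm_inner_le_norm w _
      have h2 : |(inner ℂ w (mulE A w) : ℂ).re| ≤ ‖(inner ℂ w (mulE A w) : ℂ)‖ :=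
        Complex.abs_re_le_norm _
      have h3 := abs_le.mp (h2.trans h1)
      linarith [h3.1]
    have hmuc : 0 < mu1 A - c := by linarith
    refine ⟨(1 + b / 2) * ((mu1 A - c) / m), mul_pos h1b (div_pos hmuc hm0), ?_⟩
    intro w hw
    have hw0 : w ≠ 0 := by intro h; rw [h, norm_zero] at hw; exact one_ne_zero hw.symm
    have hAw := hAwne w hw0
    have hnAw : (0:ℝ) < ‖mulE A w‖ := norm_pos_iff.mpr hAw
    have hmem : (inner ℂ w (mulE A w) : ℂ).re / (‖w‖ * ‖mulE A w‖) ∈ S :=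
      ⟨w, hw0, hAw, rfl⟩
    have hx : mu1 A ≤ (inner ℂ w (mulE A w) : ℂ).re / (‖w‖ * ‖mulE A w‖) :=
      csInf_le hbdd hmem
    rw [hw, one_mul] at hx
    have hRe : mu1 A * ‖mulE A w‖ ≤ (inner ℂ w (mulE A w) : ℂ).re :=
      (le_div_iff₀ hnAw).mp hx
    have hnormAw : 1 ≤ m * ‖mulE A w‖ := by
      have h := hlow w; rw [hw] at h; exact h
    have hAwm : (mu1 A - c) / m ≤ (mu1 A - c) * ‖mulE A w‖ := by
      rw [div_le_iff₀ hm0]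
      nlinarith [mul_le_mul_of_nonneg_left hnormAw hmuc.le]
    have h7 : (1 + b / 2) * (mu1 A * ‖mulE A w‖)
        ≤ (1 + b / 2) * (inner ℂ w (mulE A w) : ℂ).re :=
      mul_le_mul_of_nonneg_left hRe h1b.le
    calc (1 + b / 2) * ((mu1 A - c) / m)
        ≤ (1 + b / 2) * ((mu1 A - c) * ‖mulE A w‖) :=
          mul_le_mul_of_nonneg_left hAwm h1b.le
      _ = (1 + b / 2) * (mu1 A * ‖mulE A w‖) - ((1 + b / 2) * c) * ‖mulE A w‖ := by ring
      _ = (1 + b / 2) * (mu1 A * ‖mulE A w‖) - (|b| / 2) * ‖mulE A w‖ := by rw [hkey]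
      _ ≤ (1 + b / 2) * (inner ℂ w (mulE A w) : ℂ).re - (|b| / 2) * ‖mulE A w‖ := by
          linarith
end

section
/- Let N ≥ 1, let A ∈ ℂ^{N,N}, let b ∈ ℝ with b > −1, and let γ_A > 0. If (1 + b/2)·Re⟨w,Aw⟩ − (|b|/2)·|Aw| ≥ γ_A for all w ∈ ℂ^N with |w| = 1, then every eigenvalue λ of A satisfies Re λ ≥ 2γ_A/(2+b) > 0; in particular, A is invertible. -/
/-- The unit-vector form of the `L^p`-dissipativity condition forces every eigenvalue of `A`
to satisfy `Re λ ≥ 2γ_A/(2+b) > 0`; in particular `A` is invertible. -/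
theorem stmt_6 {N : ℕ} (hN : 1 ≤ N) (A : Matrix (Fin N) (Fin N) ℂ) (b : ℝ)
    (hb : -1 < b) (γ_A : ℝ) (hγ : 0 < γ_A)
    (h : ∀ w : EuclideanSpace ℂ (Fin N), ‖w‖ = 1 →
      (1 + b / 2) * (inner ℂ w (mulE A w) : ℂ).re - (|b| / 2) * ‖mulE A w‖ ≥ γ_A) :
    (∀ lam ∈ spectrum ℂ A, lam.re ≥ 2 * γ_A / (2 + b)) ∧
      0 < 2 * γ_A / (2 + b) ∧ IsUnit A := by
  have h2b : (0:ℝ) < 2 + b := by linarith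
  have key : ∀ lam ∈ spectrum ℂ A, lam.re ≥ 2 * γ_A / (2 + b) := by
    intro lam hlam
    -- transfer spectrum to the linear endomorphism on EuclideanSpace
    have hspec : lam ∈ spectrum ℂ (Matrix.toLin' A) := by
      rwa [← AlgEquiv.spectrum_eq (Matrix.toLinAlgEquiv' (R := ℂ) (n := Fin N)) A] at hlam
    have hev : Module.End.HasEigenvalue (Matrix.toLin' A) lam :=
      Module.End.hasEigenvalue_iff_mem_spectrum.mpr hspec
    obtain ⟨x, hx⟩ := hev.exists_hasEigenvector
    have hx0 : x ≠ 0 := hx.2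
    have hxA : Matrix.toLin' A x = lam • x := hx.apply_eq_smul
    -- build a unit vector in EuclideanSpace
    set v : EuclideanSpace ℂ (Fin N) := (WithLp.equiv 2 (Fin N → ℂ)).symm x with hv
    have hv0 : v ≠ 0 := by
      simpa [hv] using hx0
    have hvA : mulE A v = lam • v := by
      simp only [mulE, hv, WithLp.equiv_symm_apply, Matrix.toEuclideanLin_toLp, hxA]
      rfl
    set w : EuclideanSpace ℂ (Fin N) := (‖v‖ : ℂ)⁻¹ • v with hw
    have hnv : ‖v‖ ≠ 0 := norm_ne_zero_iff.mpr hv0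
    have hw1 : ‖w‖ = 1 := by
      simp [hw, norm_smul, hnv]
    have hwA : mulE A w = lam • w := by
      simp only [mulE, hw, map_smul] at *
      rw [hvA]
      rw [smul_comm]
    have hinn : (inner ℂ w (mulE A w) : ℂ) = lam := by
      rw [hwA, inner_smul_right]
      have : (inner ℂ w w : ℂ) = 1 := by
        rw [inner_self_eq_norm_sq_to_K, hw1]
        norm_num
      rw [this, mul_one]
    have hnorm : ‖mulE A w‖ = ‖lam‖ := by
      rw [hwA, norm_smul, hw1, mul_one]
    have hcond := h w hw1
    rw [hinn, hnorm] at hcond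
    have habs : lam.re ≤ ‖lam‖ := Complex.re_le_norm lam
    have habs0 : 0 ≤ ‖lam‖ := norm_nonneg lam
    rw [ge_iff_le, div_le_iff₀ h2b]
    rcases abs_cases b with ⟨hab, hb0⟩ | ⟨hab, hb0⟩ <;> rw [hab] at hcond <;>
      nlinarith [hcond, habs, habs0, hγ, hb0]
  refine ⟨key, by positivity, ?_⟩
  rw [← spectrum.zero_notMem_iff ℂ]
  intro h0
  have := key 0 h0
  simp only [Complex.zero_re] at this
  have : (0:ℝ) < 2 * γ_A / (2 + b) := by positivity
  linarith [key 0 h0, Complex.zero_re ▸ (key 0 h0)]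
end

section
/- Let N ≥ 1, let A ∈ ℂ^{N,N} be invertible, let b ∈ ℝ with b ≠ 0 and b > −1, and suppose there exists δ_A > 1 such that ((2+b)/|b|)·Re⟨w,Aw⟩/(|w||Aw|) ≥ δ_A for all w ∈ ℂ^N with w ≠ 0 and Aw ≠ 0. Then, with γ_A := (|b|/2)·(δ_A − 1)/‖A⁻¹‖ > 0 (where ‖A⁻¹‖ denotes the operator norm of A⁻¹), one has (1 + b/2)·Re⟨w,Aw⟩ − (|b|/2)·|Aw| ≥ γ_A for all w ∈ ℂ^N with |w| = 1. -/
/-- The `L²`-operator norm of a complex matrix, i.e. the norm of the induced continuous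
linear endomorphism of Euclidean space. -/
noncomputable def opNorm {N : ℕ} (A : Matrix (Fin N) (Fin N) ℂ) : ℝ :=
  ‖Matrix.toEuclideanCLM (𝕜 := ℂ) A‖

/-- From the antieigenvalue bound back to the unit-vector form of the `L^p`-dissipativity
condition: with `γ_A := (|b|/2)·(δ_A − 1)/‖A⁻¹‖ > 0`, one has
`(1 + b/2)·Re⟨w,Aw⟩ − (|b|/2)·|Aw| ≥ γ_A` for all unit vectors `w`. -/
theorem stmt_8 {N : ℕ} (hN : 1 ≤ N) (A : Matrix (Fin N) (Fin N) ℂ)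
    (hA : IsUnit A) (b : ℝ) (hb0 : b ≠ 0) (hb1 : -1 < b) (δ_A : ℝ) (hδ : 1 < δ_A)
    (h : ∀ w : EuclideanSpace ℂ (Fin N), w ≠ 0 → mulE A w ≠ 0 →
      ((2 + b) / |b|) * ((inner ℂ w (mulE A w) : ℂ).re / (‖w‖ * ‖mulE A w‖)) ≥ δ_A) :
    0 < (|b| / 2) * (δ_A - 1) / opNorm A⁻¹ ∧
    ∀ w : EuclideanSpace ℂ (Fin N), ‖w‖ = 1 →
      (1 + b / 2) * (inner ℂ w (mulE A w) : ℂ).re - (|b| / 2) * ‖mulE A w‖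
        ≥ (|b| / 2) * (δ_A - 1) / opNorm A⁻¹ := by
  have habs : 0 < |b| := abs_pos.mpr hb0
  have hb2 : (0:ℝ) < 2 + b := by linarith
  have hAdet := (Matrix.isUnit_iff_isUnit_det A).mp hA
  have hinv : A⁻¹ * A = 1 := Matrix.nonsing_inv_mul A hAdet
  have happ : ∀ (B : Matrix (Fin N) (Fin N) ℂ) (w : EuclideanSpace ℂ (Fin N)),
      Matrix.toEuclideanCLM (𝕜 := ℂ) B w = mulE B w := by
    intro B w
    rw [mulE, ← Matrix.coe_toEuclideanCLM_eq_toEuclideanLin]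
    rfl
  have hCLM : ∀ w : EuclideanSpace ℂ (Fin N),
      Matrix.toEuclideanCLM (𝕜 := ℂ) A⁻¹ (mulE A w) = w := by
    intro w
    have h0 : Matrix.toEuclideanCLM (𝕜 := ℂ) (A⁻¹ * A) w = w := by
      rw [hinv]; simp
    rw [map_mul] at h0
    rw [← happ]
    exact h0
  have hle : ∀ w : EuclideanSpace ℂ (Fin N), ‖w‖ ≤ opNorm A⁻¹ * ‖mulE A w‖ := by
    intro w
    calc ‖w‖ = ‖Matrix.toEuclideanCLM (𝕜 := ℂ) A⁻¹ (mulE A w)‖ := by rw [hCLM]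
      _ ≤ opNorm A⁻¹ * ‖mulE A w‖ := (Matrix.toEuclideanCLM (𝕜 := ℂ) A⁻¹).le_opNorm _
  have hop : 0 < opNorm A⁻¹ := by
    set w0 : EuclideanSpace ℂ (Fin N) := EuclideanSpace.single (⟨0, hN⟩ : Fin N) 1
    have h1 : (1:ℝ) ≤ opNorm A⁻¹ * ‖mulE A w0‖ := by
      have := hle w0
      simpa [w0, EuclideanSpace.norm_single] using this
    nlinarith [norm_nonneg (mulE A w0), norm_nonneg (Matrix.toEuclideanCLM (𝕜 := ℂ) A⁻¹)]
  have hγ : 0 < (|b| / 2) * (δ_A - 1) / opNorm A⁻¹ :=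
    div_pos (mul_pos (by positivity) (by linarith)) hop
  refine ⟨hγ, ?_⟩
  intro w hw
  have hw0 : w ≠ 0 := by
    intro h0; rw [h0] at hw; simp at hw
  have hAw0 : mulE A w ≠ 0 := by
    intro h0
    have := hle w
    rw [hw, h0] at this
    simp at this
    linarith
  have hAw : 0 < ‖mulE A w‖ := norm_pos_iff.mpr hAw0
  have hh := h w hw0 hAw0
  rw [hw, one_mul] at hh
  set R := (inner ℂ w (mulE A w) : ℂ).re with hR
  rw [ge_iff_le, div_mul_div_comm] at hh
  have h1 : δ_A * (|b| * ‖mulE A w‖) ≤ (2 + b) * R :=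
    (le_div_iff₀ (by positivity)).mp hh
  have h2 : (|b| / 2) * (δ_A - 1) / opNorm A⁻¹ ≤ (|b| / 2) * (δ_A - 1) * ‖mulE A w‖ := by
    rw [div_le_iff₀ hop]
    have h3 : (1:ℝ) ≤ opNorm A⁻¹ * ‖mulE A w‖ := by
      have := hle w; rw [hw] at this; exact this
    have h4 := mul_le_mul_of_nonneg_left h3
      (le_of_lt (mul_pos (by positivity : (0:ℝ) < |b| / 2) (by linarith : (0:ℝ) < δ_A - 1)))
    nlinarith [h4]
  nlinarith [h1, h2, hAw, habs]
end

section
/- Let N ≥ 1, let A ∈ ℂ^{N,N}, let b ∈ ℝ, and let w ∈ ℂ^N with |w| = 1. Then the minimum over all z ∈ ℂ^N with |z| = 1 of the quantity Re⟨w,Aw⟩ + b·Re⟨w,z⟩·Re⟨z,Aw⟩ exists and equals (1 + b/2)·Re⟨w,Aw⟩ − (|b|/2)·|Aw|. -/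
section Aux
variable {E : Type*} [NormedAddCommGroup E] [InnerProductSpace ℂ E]

lemma aux_bound (w z u : E) (hw : ‖w‖ = 1) (hz : ‖z‖ = 1) :
    |(inner ℂ w u : ℂ).re - 2 * ((inner ℂ w z : ℂ).re * (inner ℂ z u : ℂ).re)| ≤ ‖u‖ := by
  set x : ℝ := (inner ℂ w z : ℂ).re with hx
  set v : E := w - ((2 * x : ℝ) : ℂ) • z with hv
  have hvn : ‖v‖ = 1 := by
    have h := @norm_sub_sq ℂ _ _ _ _ w (((2 * x : ℝ) : ℂ) • z)
    rw [inner_smul_right] at h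
    simp only [RCLike.re_to_complex, Complex.re_ofReal_mul] at h
    rw [norm_smul, Complex.norm_real, hz, hw, Real.norm_eq_abs, ← hx] at h
    have h2 : ‖v‖ ^ 2 = 1 := by
      rw [hv, h]; nlinarith [sq_abs (2 * x)]
    nlinarith [norm_nonneg v]
  have hre : (inner ℂ v u : ℂ).re = (inner ℂ w u : ℂ).re - 2 * (x * (inner ℂ z u : ℂ).re) := by
    rw [hv, inner_sub_left, inner_smul_left, Complex.conj_ofReal]
    simp [Complex.re_ofReal_mul]
    ring
  calc |(inner ℂ w u : ℂ).re - 2 * (x * (inner ℂ z u : ℂ).re)| = |(inner ℂ v u : ℂ).re| := by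
        rw [hre]
    _ ≤ ‖(inner ℂ v u : ℂ)‖ := Complex.abs_re_le_norm _
    _ = ‖(inner ℂ v u : ℂ)‖ := rfl
    _ ≤ ‖v‖ * ‖u‖ := norm_inner_le_norm v u
    _ = ‖u‖ := by rw [hvn, one_mul]

lemma aux_exists (w u : E) (hw : ‖w‖ = 1) (ε : ℝ) (hε : ε ^ 2 = 1)
    (hs : 0 < ‖u‖) (hc : 0 < ‖u‖ + ε * (inner ℂ w u : ℂ).re) :
    ∃ z : E, ‖z‖ = 1 ∧
      (inner ℂ w z : ℂ).re * (inner ℂ z u : ℂ).re = ((inner ℂ w u : ℂ).re + ε * ‖u‖) / 2 := by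
  set s : ℝ := ‖u‖ with hsd
  set r : ℝ := (inner ℂ w u : ℂ).re with hrd
  set c : ℝ := s + ε * r with hcd
  set v : E := (s : ℂ) • w + (ε : ℂ) • u with hv
  have hvsq : ‖v‖ ^ 2 = 2 * s * c := by
    have h := @norm_add_sq ℂ _ _ _ _ ((s : ℂ) • w) ((ε : ℂ) • u)
    rw [inner_smul_left, inner_smul_right, Complex.conj_ofReal] at h
    simp only [RCLike.re_to_complex] at h
    rw [hv, h, norm_smul, norm_smul, hw, Complex.norm_real, Complex.norm_real]
    have h3 : ((s : ℂ) * ((ε : ℂ) * (inner ℂ w u : ℂ))).re = s * (ε * r) := by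
      rw [Complex.re_ofReal_mul, Complex.re_ofReal_mul]
    rw [h3]
    have h1 : |ε| ^ 2 = 1 := by rw [sq_abs]; exact hε
    have h2 : |s| = s := abs_of_nonneg (le_of_lt hs)
    simp only [Real.norm_eq_abs]
    rw [h2, ← hsd, hcd]
    have h4 : (|ε| * s) ^ 2 = s ^ 2 := by rw [mul_pow, h1, one_mul]
    rw [h4]; ring
  have hn : 0 < ‖v‖ := by nlinarith [norm_nonneg v]
  refine ⟨((‖v‖⁻¹ : ℝ) : ℂ) • v, ?_, ?_⟩
  · rw [norm_smul, Complex.norm_real, Real.norm_eq_abs, abs_of_nonneg (inv_nonneg.mpr hn.le),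
      inv_mul_cancel₀ (ne_of_gt hn)]
  · have h1 : (inner ℂ w (((‖v‖⁻¹ : ℝ) : ℂ) • v) : ℂ).re = ‖v‖⁻¹ * c := by
      rw [inner_smul_right, hv, inner_add_right, inner_smul_right, inner_smul_right,
        inner_self_eq_norm_sq_to_K, hw]
      simp [Complex.mul_re, Complex.add_re, Complex.mul_im]
      exact Or.inl hcd.symm
    have h2 : (inner ℂ (((‖v‖⁻¹ : ℝ) : ℂ) • v) u : ℂ).re = ‖v‖⁻¹ * (ε * s * c) := by
      rw [inner_smul_left, Complex.conj_ofReal, hv, inner_add_left, inner_smul_left,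
        inner_smul_left, Complex.conj_ofReal, Complex.conj_ofReal,
        inner_self_eq_norm_sq_to_K]
      have hwu : (inner ℂ w u : ℂ).re = r := rfl
      simp [Complex.mul_re, Complex.add_re, Complex.mul_im, hwu]
      left
      rw [← Complex.ofReal_pow, Complex.ofReal_re, ← hsd]
      have h6 : ε * s * c = ε * s ^ 2 + ε ^ 2 * (s * r) := by rw [hcd]; ring
      rw [h6, hε]; ring
    rw [h1, h2]
    have hrε : r + ε * s = ε * c := by
      have h5 : ε * (s + ε * r) = ε * s + ε ^ 2 * r := by ring
      rw [hcd, h5, hε]; ring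
    rw [hrε]
    have hn2 : ‖v‖ * ‖v‖ = 2 * s * c := by nlinarith [hvsq]
    field_simp
    rw [hvsq]; ring

end Aux

/-- For a unit vector `w`, the minimum over unit vectors `z` of
`Re⟨w,Aw⟩ + b·Re⟨w,z⟩·Re⟨z,Aw⟩` exists and equals `(1 + b/2)·Re⟨w,Aw⟩ − (|b|/2)·|Aw|`. -/
theorem stmt_10 {N : ℕ} (hN : 1 ≤ N) (A : Matrix (Fin N) (Fin N) ℂ) (b : ℝ)
    (w : EuclideanSpace ℂ (Fin N)) (hw : ‖w‖ = 1) :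
    IsLeast {x : ℝ | ∃ z : EuclideanSpace ℂ (Fin N), ‖z‖ = 1 ∧
        x = (inner ℂ w (mulE A w) : ℂ).re
          + b * ((inner ℂ w z : ℂ).re * (inner ℂ z (mulE A w) : ℂ).re)}
      ((1 + b / 2) * (inner ℂ w (mulE A w) : ℂ).re - (|b| / 2) * ‖mulE A w‖) := by
  set u : EuclideanSpace ℂ (Fin N) := mulE A w with hu
  set s : ℝ := ‖u‖ with hsd
  set r : ℝ := (inner ℂ w u : ℂ).re with hrd
  have hww : (inner ℂ w w : ℂ).re = 1 := by
    rw [inner_self_eq_norm_sq_to_K, hw]; simp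
  have hrs : |r| ≤ s := by
    have h := aux_bound w w u hw hw
    rw [hww] at h
    calc |r| = |r - 2 * (1 * r)| := by rw [abs_sub_comm]; congr 1; ring
      _ ≤ s := h
  have hIw : (inner ℂ w (Complex.I • w) : ℂ).re = 0 := by
    rw [inner_smul_right, inner_self_eq_norm_sq_to_K, hw]
    simp
  have hIwn : ‖Complex.I • w‖ = 1 := by
    rw [norm_smul, Complex.norm_I, hw, one_mul]
  constructor
  · -- membership
    show ∃ z, _ ∧ _
    rcases eq_or_ne b 0 with hb | hb
    · exact ⟨w, hw, by rw [hb]; simp⟩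
    have key : ∀ ε : ℝ, (ε = 1 ∨ ε = -1) → |b| = -ε * b →
        ∃ z : EuclideanSpace ℂ (Fin N), ‖z‖ = 1 ∧
          (1 + b / 2) * r - (|b| / 2) * s
            = r + b * ((inner ℂ w z : ℂ).re * (inner ℂ z u : ℂ).re) := by
      intro ε hε' habs
      have hε : ε ^ 2 = 1 := by rcases hε' with rfl | rfl <;> norm_num
      have hcnn : (0:ℝ) ≤ s + ε * r := by
        rcases hε' with rfl | rfl <;> rcases abs_le.mp hrs with ⟨h1, h2⟩ <;> linarith
      rcases eq_or_lt_of_le hcnn with hc | hc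
      · refine ⟨Complex.I • w, hIwn, ?_⟩
        rw [hIw, habs]
        rcases hε' with rfl | rfl
        · linear_combination (-(b/2)) * hc
        · linear_combination (b/2) * hc
      · have hs : 0 < s := by
          rcases hε' with rfl | rfl <;> rcases abs_le.mp hrs with ⟨h1, h2⟩ <;> linarith
        obtain ⟨z, hz1, hz2⟩ := aux_exists w u hw ε hε hs hc
        refine ⟨z, hz1, ?_⟩
        rw [hz2, habs]
        ring
    rcases hb.lt_or_gt with hbneg | hbpos
    · exact key 1 (by norm_num) (by rw [abs_of_neg hbneg]; ring)
    · exact key (-1) (by norm_num) (by rw [abs_of_pos hbpos]; ring)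
  · -- lower bound
    rintro x ⟨z, hz, rfl⟩
    have h := abs_le.mp (aux_bound w z u hw hz)
    rcases abs_cases b with ⟨h1, h2⟩ | ⟨h1, h2⟩ <;> nlinarith [h.1, h.2]
end

section
/- Let N ≥ 1 and let A ∈ ℂ^{N,N} be Hermitian positive definite with smallest eigenvalue λ₁ > 0 and largest eigenvalue λ_N. Then μ₁(A) = √(λ₁·λ_N) / ((λ₁ + λ_N)/2), i.e. the first antieigenvalue of A equals the quotient of the geometric mean and the arithmetic mean of the smallest and largest eigenvalues of A. -/
set_option maxRecDepth 8000
set_option maxHeartbeats 1600000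

open scoped ComplexOrder

lemma aux_apply {N : ℕ} (A : Matrix (Fin N) (Fin N) ℂ) (hHerm : A.IsHermitian) (k : Fin N) :
    Matrix.toEuclideanLin A (hHerm.eigenvectorBasis k) =
      (hHerm.eigenvalues k : ℂ) • hHerm.eigenvectorBasis k := by
  have h := hHerm.mulVec_eigenvectorBasis k
  ext x
  have := congrFun h x
  simpa [Matrix.toEuclideanLin_apply, Complex.real_smul] using this

lemma aux_spec {N : ℕ} (A : Matrix (Fin N) (Fin N) ℂ) (hHerm : A.IsHermitian) (k : Fin N) :
    ((hHerm.eigenvalues k : ℝ) : ℂ) ∈ spectrum ℂ A := by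
  rw [← Matrix.spectrum_toEuclideanLin]
  exact (Module.End.hasEigenvalue_of_hasEigenvector
    ⟨Module.End.mem_eigenspace_iff.2 (aux_apply A hHerm k),
      hHerm.eigenvectorBasis.orthonormal.ne_zero k⟩).mem_spectrum

lemma aux_exists_s15 {N : ℕ} (A : Matrix (Fin N) (Fin N) ℂ) (hHerm : A.IsHermitian) (r : ℝ)
    (hr : (r : ℂ) ∈ spectrum ℂ A) : ∃ k, hHerm.eigenvalues k = r := by
  have hsymm : (Matrix.toEuclideanLin A).IsSymmetric :=
    Matrix.isHermitian_iff_isSymmetric.1 hHerm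
  rw [← Matrix.spectrum_toEuclideanLin] at hr
  have hev : Module.End.HasEigenvalue (Matrix.toEuclideanLin A) (r : ℂ) :=
    Module.End.hasEigenvalue_iff_mem_spectrum.2 hr
  obtain ⟨v, hv1, hv0⟩ := hev.exists_hasEigenvector
  have hv1 : Matrix.toEuclideanLin A v = (r : ℂ) • v := Module.End.mem_eigenspace_iff.1 hv1
  have : ∃ k, (inner ℂ (hHerm.eigenvectorBasis k) v : ℂ) ≠ 0 := by
    by_contra h
    push_neg at h
    apply hv0
    have : hHerm.eigenvectorBasis.repr v = 0 := by
      ext k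
      simpa [OrthonormalBasis.repr_apply_apply] using h k
    simpa using congrArg hHerm.eigenvectorBasis.repr.symm this
  obtain ⟨k, hk⟩ := this
  refine ⟨k, ?_⟩
  have h1 : (inner ℂ (hHerm.eigenvectorBasis k) (Matrix.toEuclideanLin A v) : ℂ)
      = (hHerm.eigenvalues k : ℂ) * inner ℂ (hHerm.eigenvectorBasis k) v := by
    rw [← hsymm (hHerm.eigenvectorBasis k) v, aux_apply A hHerm k,
      inner_smul_left, Complex.conj_ofReal]
  rw [hv1, inner_smul_right] at h1
  have := mul_right_cancel₀ hk (h1.trans rfl).symm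
  exact_mod_cast this

/-- For a Hermitian positive definite matrix `A` with smallest eigenvalue `λ₁ > 0` and
largest eigenvalue `λ_N`, the first antieigenvalue equals the quotient of the geometric
mean and the arithmetic mean of `λ₁` and `λ_N`. -/
theorem stmt_15 {N : ℕ} (hN : 1 ≤ N) (A : Matrix (Fin N) (Fin N) ℂ)
    (hHerm : A.IsHermitian) (hPD : A.PosDef) (lam1 lamN : ℝ) (hlam1 : 0 < lam1)
    (hleast : IsLeast {x : ℝ | (x : ℂ) ∈ spectrum ℂ A} lam1)
    (hgreatest : IsGreatest {x : ℝ | (x : ℂ) ∈ spectrum ℂ A} lamN) :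
    mu1 A = Real.sqrt (lam1 * lamN) / ((lam1 + lamN) / 2) := by
  classical
  have hsymm : (Matrix.toEuclideanLin A).IsSymmetric :=
    Matrix.isHermitian_iff_isSymmetric.1 hHerm
  set B := hHerm.eigenvectorBasis with hB
  set μ := hHerm.eigenvalues with hμdef
  have hμ1 : ∀ k, lam1 ≤ μ k := fun k => hleast.2 (aux_spec A hHerm k)
  have hμN : ∀ k, μ k ≤ lamN := fun k => hgreatest.2 (aux_spec A hHerm k)
  have h1N : lam1 ≤ lamN := hgreatest.2 hleast.1
  have hlamN : 0 < lamN := lt_of_lt_of_le hlam1 h1N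
  have hsum : 0 < lam1 + lamN := by linarith
  set g : ℝ := Real.sqrt (lam1 * lamN) / ((lam1 + lamN) / 2) with hgdef
  have hgs : Real.sqrt (lam1 * lamN) ^ 2 = lam1 * lamN := Real.sq_sqrt (by positivity)
  -- Lower bound
  have hlb : ∀ x ∈ { x : ℝ | ∃ w : EuclideanSpace ℂ (Fin N), w ≠ 0 ∧ mulE A w ≠ 0 ∧
      x = (inner ℂ w (mulE A w) : ℂ).re / (‖w‖ * ‖mulE A w‖) }, g ≤ x := by
    rintro x ⟨w, hw0, hAw0, rfl⟩
    have hmul : mulE A w = Matrix.toEuclideanLin A w := rfl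
    set c : EuclideanSpace ℂ (Fin N) := B.repr w with hc
    set t : Fin N → ℝ := fun k => ‖c k‖ ^ 2 with ht
    have htnn : ∀ k, 0 ≤ t k := fun k => by positivity
    have hrepr : ∀ k, B.repr (Matrix.toEuclideanLin A w) k = (μ k : ℂ) * c k := by
      intro k
      rw [hc, B.repr_apply_apply, B.repr_apply_apply, ← hsymm (B k) w, aux_apply A hHerm k,
        inner_smul_left, Complex.conj_ofReal]
    have hS : (inner ℂ w (Matrix.toEuclideanLin A w) : ℂ).re = ∑ k, μ k * t k := by
      rw [← B.repr.inner_map_map w (Matrix.toEuclideanLin A w), PiLp.inner_apply,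
        Complex.re_sum]
      congr 1; ext k
      rw [hrepr k]
      have h1 : (inner ℂ (c k) ((μ k : ℂ) * c k) : ℂ) = (μ k : ℂ) * (starRingEnd ℂ (c k) * c k) := by
        simp [RCLike.inner_apply]; ring
      rw [h1, mul_comm (starRingEnd ℂ (c k)) (c k), Complex.mul_conj,
        ← Complex.ofReal_mul, Complex.ofReal_re, ht,
        Complex.normSq_eq_norm_sq]
    have hnw : ‖w‖ ^ 2 = ∑ k, t k := by
      rw [← B.repr.norm_map w, EuclideanSpace.norm_eq, Real.sq_sqrt (by positivity)]
    have hnAw : ‖Matrix.toEuclideanLin A w‖ ^ 2 = ∑ k, (μ k) ^ 2 * t k := by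
      rw [← B.repr.norm_map, EuclideanSpace.norm_eq, Real.sq_sqrt (by positivity)]
      congr 1; ext k
      rw [hrepr k]
      simp [norm_mul, mul_pow, ht]
    have key : ‖Matrix.toEuclideanLin A w‖ ^ 2 + lam1 * lamN * ‖w‖ ^ 2
        ≤ (lam1 + lamN) * (inner ℂ w (Matrix.toEuclideanLin A w) : ℂ).re := by
      rw [hS, hnw, hnAw, Finset.mul_sum, Finset.mul_sum, ← Finset.sum_add_distrib]
      refine Finset.sum_le_sum fun k _ => ?_
      nlinarith [mul_nonneg (mul_nonneg (sub_nonneg.2 (hμN k)) (sub_nonneg.2 (hμ1 k))) (htnn k)]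
    have ha : 0 < ‖w‖ := norm_pos_iff.2 hw0
    have hb : 0 < ‖mulE A w‖ := norm_pos_iff.2 hAw0
    have hb' : 0 < ‖Matrix.toEuclideanLin A w‖ := hmul ▸ hb
    have amgm : 2 * Real.sqrt (lam1 * lamN) * (‖w‖ * ‖Matrix.toEuclideanLin A w‖)
        ≤ lam1 * lamN * ‖w‖ ^ 2 + ‖Matrix.toEuclideanLin A w‖ ^ 2 := by
      nlinarith [sq_nonneg (Real.sqrt (lam1 * lamN) * ‖w‖ - ‖Matrix.toEuclideanLin A w‖), hgs]
    rw [hmul, hgdef, div_le_div_iff₀ (by positivity) (by positivity)]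
    nlinarith [key, amgm]
  -- Membership
  have hmem : g ∈ { x : ℝ | ∃ w : EuclideanSpace ℂ (Fin N), w ≠ 0 ∧ mulE A w ≠ 0 ∧
      x = (inner ℂ w (mulE A w) : ℂ).re / (‖w‖ * ‖mulE A w‖) } := by
    rcases eq_or_lt_of_le h1N with heq | hlt
    · -- lam1 = lamN : every unit eigenvector attains the value 1
      refine ⟨B ⟨0, hN⟩, B.orthonormal.ne_zero _, ?_, ?_⟩
      all_goals {
        have hAw : mulE A (B ⟨0, hN⟩) = (lam1 : ℂ) • B ⟨0, hN⟩ := by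
          have h := aux_apply A hHerm ⟨0, hN⟩
          have hμeq : μ ⟨0, hN⟩ = lam1 := le_antisymm (heq ▸ hμN _) (hμ1 _)
          rw [← hμdef, hμeq] at h
          exact h
        have hn1 : ‖B ⟨0, hN⟩‖ = 1 := B.orthonormal.1 _
        first
        | exact hAw ▸ smul_ne_zero (Complex.ofReal_ne_zero.2 hlam1.ne')
            (B.orthonormal.ne_zero _)
        | (rw [hAw, inner_smul_right, inner_self_eq_norm_sq_to_K, hn1, norm_smul, hn1]
           rw [hgdef, ← heq, Real.sqrt_mul_self hlam1.le]
           simp only [Complex.norm_real, Real.norm_eq_abs, abs_of_pos hlam1, one_pow,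
             mul_one, one_mul, Complex.ofReal_re]
           field_simp
           simp
           ring)
      }
    · -- lam1 < lamN
      obtain ⟨i, hi⟩ := aux_exists_s15 A hHerm lam1 hleast.1
      obtain ⟨j, hj⟩ := aux_exists_s15 A hHerm lamN hgreatest.1
      have hij : i ≠ j := by
        intro h
        rw [h, hj] at hi
        exact absurd hi hlt.ne'
      set s1 := Real.sqrt lam1 with hs1def
      set sN := Real.sqrt lamN with hsNdef
      have hs1 : s1 * s1 = lam1 := Real.mul_self_sqrt hlam1.le
      have hsN : sN * sN = lamN := Real.mul_self_sqrt hlamN.le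
      have hs1p : 0 < s1 := Real.sqrt_pos.2 hlam1
      have hsNp : 0 < sN := Real.sqrt_pos.2 hlamN
      set w : EuclideanSpace ℂ (Fin N) := (sN : ℂ) • B i + (s1 : ℂ) • B j with hwdef
      have hii : (inner ℂ (B i) (B i) : ℂ) = 1 := by
        rw [inner_self_eq_norm_sq_to_K, B.orthonormal.1 i]; norm_num
      have hjj : (inner ℂ (B j) (B j) : ℂ) = 1 := by
        rw [inner_self_eq_norm_sq_to_K, B.orthonormal.1 j]; norm_num
      have hij0 : (inner ℂ (B i) (B j) : ℂ) = 0 := B.orthonormal.2 hij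
      have hji0 : (inner ℂ (B j) (B i) : ℂ) = 0 := B.orthonormal.2 hij.symm
      have hAw : mulE A w = ((sN * lam1 : ℝ) : ℂ) • B i + ((s1 * lamN : ℝ) : ℂ) • B j := by
        show Matrix.toEuclideanLin A w = _
        have hi' : hHerm.eigenvalues i = lam1 := hi
        have hj' : hHerm.eigenvalues j = lamN := hj
        rw [hwdef, map_add, map_smul, map_smul, aux_apply A hHerm i, aux_apply A hHerm j,
          hi', hj', smul_smul, smul_smul]
        norm_cast
      have hinner : (inner ℂ w (mulE A w) : ℂ) = ((2 * (lam1 * lamN) : ℝ) : ℂ) := by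
        rw [hAw, hwdef]
        simp only [inner_add_left, inner_add_right, inner_smul_left, inner_smul_right,
          hii, hjj, hij0, hji0, Complex.conj_ofReal, mul_zero, mul_one, add_zero, zero_add]
        push_cast
        norm_cast
        rw [show sN * lam1 * sN + s1 * lamN * s1 = 2 * (lam1 * lamN) by
          linear_combination lam1 * hsN + lamN * hs1]
        push_cast; ring
      have hinne : (inner ℂ w (mulE A w) : ℂ) ≠ 0 := by
        rw [hinner]
        exact_mod_cast (by positivity : (2 * (lam1 * lamN) : ℝ) ≠ 0)
      have hw0 : w ≠ 0 := by
        intro h; rw [h] at hinne; simp at hinne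
      have hAw0 : mulE A w ≠ 0 := by
        intro h; rw [h] at hinne; simp at hinne
      refine ⟨w, hw0, hAw0, ?_⟩
      have hw2 : ‖w‖ ^ 2 = lam1 + lamN := by
        have : (inner ℂ w w : ℂ) = ((lam1 + lamN : ℝ) : ℂ) := by
          rw [hwdef]
          simp only [inner_add_left, inner_add_right, inner_smul_left, inner_smul_right,
            hii, hjj, hij0, hji0, Complex.conj_ofReal, mul_zero, mul_one, add_zero, zero_add]
          norm_cast
          linear_combination hsN + hs1
        have h2 := inner_self_eq_norm_sq_to_K (𝕜 := ℂ) w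
        rw [this] at h2
        have h3 : ((lam1 + lamN : ℝ) : ℂ) = ((‖w‖ ^ 2 : ℝ) : ℂ) := by
          rw [h2]; norm_cast
        exact (Complex.ofReal_inj.1 h3).symm
      have hAw2 : ‖mulE A w‖ ^ 2 = lam1 * lamN * (lam1 + lamN) := by
        have : (inner ℂ (mulE A w) (mulE A w) : ℂ)
            = ((lam1 * lamN * (lam1 + lamN) : ℝ) : ℂ) := by
          rw [hAw]
          simp only [inner_add_left, inner_add_right, inner_smul_left, inner_smul_right,
            hii, hjj, hij0, hji0, Complex.conj_ofReal, mul_zero, mul_one, add_zero, zero_add]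
          push_cast
          norm_cast
          linear_combination lam1 * lam1 * hsN + lamN * lamN * hs1
        have h2 := inner_self_eq_norm_sq_to_K (𝕜 := ℂ) (mulE A w)
        rw [this] at h2
        have h3 : ((lam1 * lamN * (lam1 + lamN) : ℝ) : ℂ) = ((‖mulE A w‖ ^ 2 : ℝ) : ℂ) := by
          rw [h2]; norm_cast
        exact (Complex.ofReal_inj.1 h3).symm
      have hwn : ‖w‖ = Real.sqrt (lam1 + lamN) := by
        rw [← Real.sqrt_sq (norm_nonneg w), hw2]
      have hAwn : ‖mulE A w‖ = Real.sqrt (lam1 * lamN * (lam1 + lamN)) := by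
        rw [← Real.sqrt_sq (norm_nonneg (mulE A w)), hAw2]
      rw [hinner, Complex.ofReal_re, hwn, hAwn, ← Real.sqrt_mul hsum.le,
        show (lam1 + lamN) * (lam1 * lamN * (lam1 + lamN))
          = (lam1 + lamN) ^ 2 * (lam1 * lamN) by ring,
        Real.sqrt_mul (sq_nonneg _), Real.sqrt_sq hsum.le, hgdef]
      rw [div_eq_div_iff (by positivity) (by positivity)]
      nlinarith [hgs, Real.sqrt_nonneg (lam1 * lamN)]
  have : IsLeast { x : ℝ | ∃ w : EuclideanSpace ℂ (Fin N), w ≠ 0 ∧ mulE A w ≠ 0 ∧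
      x = (inner ℂ w (mulE A w) : ℂ).re / (‖w‖ * ‖mulE A w‖) } g := ⟨hmem, hlb⟩
  rw [mu1, this.csInf_eq, hgdef]
end

section
/- Let N ≥ 2, let A ∈ ℂ^{N,N}, let λ₁, λ_N > 0 be real numbers, and let u₁, u_N ∈ ℂ^N be orthogonal unit vectors with A u₁ = λ₁ u₁ and A u_N = λ_N u_N. Then the vector w := √(λ_N)·u₁ + √(λ₁)·u_N satisfies w ≠ 0, Aw ≠ 0 and Re⟨w,Aw⟩/(|w||Aw|) = 2·√(λ₁·λ_N)/(λ₁ + λ_N). -/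
/-- If `u₁, u_N` are orthogonal unit eigenvectors of `A` for positive real eigenvalues
`λ₁, λ_N`, then `w := √λ_N·u₁ + √λ₁·u_N` satisfies `w ≠ 0`, `Aw ≠ 0` and
`Re⟨w,Aw⟩/(|w||Aw|) = 2√(λ₁λ_N)/(λ₁+λ_N)`. -/
theorem stmt_16 {N : ℕ} (hN : 2 ≤ N) (A : Matrix (Fin N) (Fin N) ℂ)
    (lam1 lamN : ℝ) (hlam1 : 0 < lam1) (hlamN : 0 < lamN)
    (u1 uN : EuclideanSpace ℂ (Fin N)) (hu1 : ‖u1‖ = 1) (huN : ‖uN‖ = 1)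
    (horth : (inner ℂ u1 uN : ℂ) = 0)
    (hAu1 : mulE A u1 = (lam1 : ℂ) • u1) (hAuN : mulE A uN = (lamN : ℂ) • uN) :
    (Real.sqrt lamN : ℂ) • u1 + (Real.sqrt lam1 : ℂ) • uN ≠ 0 ∧
    mulE A ((Real.sqrt lamN : ℂ) • u1 + (Real.sqrt lam1 : ℂ) • uN) ≠ 0 ∧
    (inner ℂ ((Real.sqrt lamN : ℂ) • u1 + (Real.sqrt lam1 : ℂ) • uN)
        (mulE A ((Real.sqrt lamN : ℂ) • u1 + (Real.sqrt lam1 : ℂ) • uN)) : ℂ).re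
      / (‖(Real.sqrt lamN : ℂ) • u1 + (Real.sqrt lam1 : ℂ) • uN‖
          * ‖mulE A ((Real.sqrt lamN : ℂ) • u1 + (Real.sqrt lam1 : ℂ) • uN)‖)
      = 2 * Real.sqrt (lam1 * lamN) / (lam1 + lamN) := by
  set a := Real.sqrt lamN with ha
  set b := Real.sqrt lam1 with hb
  have ha0 : 0 < a := Real.sqrt_pos.mpr hlamN
  have hb0 : 0 < b := Real.sqrt_pos.mpr hlam1
  have ha2 : a * a = lamN := Real.mul_self_sqrt hlamN.le
  have hb2 : b * b = lam1 := Real.mul_self_sqrt hlam1.le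
  have horth' : (inner ℂ uN u1 : ℂ) = 0 := by
    rw [← inner_conj_symm, horth]; simp
  set w := (a : ℂ) • u1 + (b : ℂ) • uN with hw
  have hAw : mulE A w = ((a * lam1 : ℝ) : ℂ) • u1 + ((b * lamN : ℝ) : ℂ) • uN := by
    simp only [mulE, hw, map_add, LinearMap.map_smul]
    simp only [mulE] at hAu1 hAuN
    rw [hAu1, hAuN, smul_smul, smul_smul]
    push_cast
    ring_nf
  have hcross : ∀ x y : ℂ, (inner ℂ (x • u1) (y • uN) : ℂ) = 0 := fun x y => by
    rw [inner_smul_left, inner_smul_right, horth]; ring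
  have hnw : ‖w‖ = Real.sqrt (lam1 + lamN) := by
    have hsq : ‖w‖ ^ 2 = lam1 + lamN := by
      rw [hw, norm_add_sq (𝕜 := ℂ), hcross]
      simp [norm_smul, hu1, huN]
      linear_combination ha2 + hb2
    rw [← Real.sqrt_sq (norm_nonneg w), hsq]
  have hnAw : ‖mulE A w‖ = Real.sqrt (lam1 * lamN * (lam1 + lamN)) := by
    have hsq : ‖mulE A w‖ ^ 2 = lam1 * lamN * (lam1 + lamN) := by
      rw [hAw, norm_add_sq (𝕜 := ℂ), hcross]
      simp [norm_smul, hu1, huN]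
      rw [abs_of_nonneg ha0.le, abs_of_nonneg hb0.le, abs_of_nonneg hlam1.le,
        abs_of_nonneg hlamN.le]
      linear_combination lam1 ^ 2 * ha2 + lamN ^ 2 * hb2
    rw [← Real.sqrt_sq (norm_nonneg _), hsq]
  have hu1i : (inner ℂ u1 u1 : ℂ) = 1 := by
    rw [inner_self_eq_norm_sq_to_K (𝕜 := ℂ), hu1]; norm_num
  have huNi : (inner ℂ uN uN : ℂ) = 1 := by
    rw [inner_self_eq_norm_sq_to_K (𝕜 := ℂ), huN]; norm_num
  have hiw : (inner ℂ w (mulE A w) : ℂ) = ((2 * lam1 * lamN : ℝ) : ℂ) := by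
    rw [hAw, hw]
    simp only [inner_add_left, inner_add_right, inner_smul_left, inner_smul_right,
      horth, horth', hu1i, huNi, Complex.conj_ofReal, mul_zero, mul_one, add_zero,
      zero_add]
    push_cast
    have ha2' : (a : ℂ) * (a : ℂ) = (lamN : ℂ) := by norm_cast
    have hb2' : (b : ℂ) * (b : ℂ) = (lam1 : ℂ) := by norm_cast
    linear_combination (lam1 : ℂ) * ha2' + (lamN : ℂ) * hb2' 
  refine ⟨?_, ?_, ?_⟩
  · intro h
    have := hnw
    rw [h, norm_zero] at this
    have h2 : (0:ℝ) < Real.sqrt (lam1 + lamN) := Real.sqrt_pos.mpr (by linarith)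
    linarith
  · intro h
    rw [h, norm_zero] at hnAw
    have h2 : (0:ℝ) < Real.sqrt (lam1 * lamN * (lam1 + lamN)) :=
      Real.sqrt_pos.mpr (by positivity)
    linarith
  · rw [hiw, hnw, hnAw]
    have hden : Real.sqrt (lam1 + lamN) * Real.sqrt (lam1 * lamN * (lam1 + lamN))
        = (lam1 + lamN) * Real.sqrt (lam1 * lamN) := by
      rw [show lam1 * lamN * (lam1 + lamN) = (lam1 + lamN) * (lam1 * lamN) by ring,
        Real.sqrt_mul (by positivity)]
      rw [← mul_assoc, ← Real.sqrt_mul (by positivity), Real.sqrt_mul_self (by positivity)]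
    have hs : Real.sqrt (lam1 * lamN) * Real.sqrt (lam1 * lamN) = lam1 * lamN :=
      Real.mul_self_sqrt (by positivity)
    have hs0 : (0:ℝ) < Real.sqrt (lam1 * lamN) := Real.sqrt_pos.mpr (by positivity)
    rw [Complex.ofReal_re, hden, div_eq_div_iff
      (by positivity : (0:ℝ) < (lam1 + lamN) * Real.sqrt (lam1 * lamN)).ne'
      (by positivity : (0:ℝ) < lam1 + lamN).ne']
    linear_combination (-2) * (lam1 + lamN) * hs
end
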